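/- arXiv:1409.1684 — 5 statements merged into one kernel-verified Lean document; each statement's English description precedes it below -/
import Mathlib

section
/- For |q| < 1 and |x| < 1, the infinite q-Pochhammer symbol satisfies 1/(x;q)_∞ = ∑_{k=0}^∞ x^k / (q;q)_k (Euler's identity). -/
/-- The finite q-Pochhammer symbol `(a;q)_k`. -/
def qPoch (a q : ℝ) (k : ℕ) : ℝ := ∏ i ∈ Finset.range k, (1 - a * q ^ i)

/-- The infinite q-Pochhammer symbol `(x;q)_∞ = ∏_{j≥0} (1 - x q^j)`. -/
noncomputable def qPochInf (x q : ℝ) : ℝ := ∏' j : ℕ, (1 - x * q ^ j)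

open Real Filter Topology

-- |log(1-y)| ≤ |y|/(1-a) for |y| ≤ a < 1
lemma abs_log_one_sub_le {y a : ℝ} (hy : |y| ≤ a) (ha : a < 1) :
    |Real.log (1 - y)| ≤ |y| / (1 - a) := by
  have hy' := abs_le.1 hy
  have h1 : (0:ℝ) < 1 - y := by linarith
  have h1a : (0:ℝ) < 1 - a := by linarith
  have hu : Real.log (1 - y) ≤ -y := by
    have := Real.log_le_sub_one_of_pos h1
    linarith
  have hl : -Real.log (1 - y) ≤ y / (1 - y) := by
    have h2 : (0:ℝ) < (1 - y)⁻¹ := by positivity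
    have := Real.log_le_sub_one_of_pos h2
    rw [Real.log_inv] at this
    have : -Real.log (1 - y) ≤ (1 - y)⁻¹ - 1 := this
    have heq : (1 - y)⁻¹ - 1 = y / (1 - y) := by field_simp; ring
    linarith [heq ▸ this]
  rw [abs_le]
  constructor
  · have h3 : y / (1 - y) ≤ |y| / (1 - a) := by
      rcases le_or_gt 0 y with h | h
      · exact div_le_div₀ (abs_nonneg y) (le_abs_self y) h1a (by linarith)
      · calc y / (1 - y) ≤ 0 := div_nonpos_of_nonpos_of_nonneg h.le h1.le
          _ ≤ |y| / (1 - a) := by positivity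
    linarith
  · calc Real.log (1 - y) ≤ -y := hu
      _ ≤ |y| := neg_le_abs y
      _ ≤ |y| / (1 - a) := by
        rw [le_div_iff₀ h1a]; nlinarith [abs_nonneg y]

lemma summable_abs_log (q y : ℝ) (hq : |q| < 1) (hy : |y| < 1) :
    Summable (fun j : ℕ => |Real.log (1 - y * q ^ j)|) := by
  have hgeo := (summable_geometric_of_lt_one (abs_nonneg q) hq).mul_left (|y| / (1 - |y|))
  refine Summable.of_nonneg_of_le (fun j => abs_nonneg _) (fun j => ?_) hgeo
  have hb : |y * q ^ j| ≤ |y| := by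
    rw [abs_mul, abs_pow]
    nlinarith [pow_le_one₀ (abs_nonneg q) hq.le (n := j), abs_nonneg y, pow_nonneg (abs_nonneg q) j]
  calc |Real.log (1 - y * q ^ j)| ≤ |y * q ^ j| / (1 - |y|) := abs_log_one_sub_le hb hy
    _ = |y| / (1 - |y|) * |q| ^ j := by rw [abs_mul, abs_pow]; ring

lemma one_sub_pos' (q y : ℝ) (hq : |q| < 1) (hy : |y| < 1) (j : ℕ) :
    0 < 1 - y * q ^ j := by
  have hb : |y * q ^ j| ≤ |y| := by
    rw [abs_mul, abs_pow]
    nlinarith [pow_le_one₀ (abs_nonneg q) hq.le (n := j), abs_nonneg y, pow_nonneg (abs_nonneg q) j]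
  have := abs_le.1 hb
  have := abs_lt.1 hy
  linarith

lemma hasProd_one_sub (q y : ℝ) (hq : |q| < 1) (hy : |y| < 1) :
    HasProd (fun j : ℕ => 1 - y * q ^ j) (qPochInf y q) :=
  (Real.hasProd_of_hasSum_log (fun j => one_sub_pos' q y hq hy j)
    ((summable_abs_log q y hq hy).of_abs).hasSum).multipliable.hasProd

lemma qPochInf_pos (q y : ℝ) (hq : |q| < 1) (hy : |y| < 1) : 0 < qPochInf y q := by
  have := Real.rexp_tsum_eq_tprod (f := fun j => 1 - y * q ^ j)
    (fun j => one_sub_pos' q y hq hy j)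
    (summable_abs_log q y hq hy).of_abs
  rw [qPochInf, ← this]
  exact Real.exp_pos _

noncomputable def qC (q : ℝ) : ℝ := Real.exp (-(∑' j : ℕ, |Real.log (1 - q * q ^ j)|))

lemma qC_pos (q : ℝ) : 0 < qC q := Real.exp_pos _

lemma qC_le_qPoch (q : ℝ) (hq : |q| < 1) (k : ℕ) : qC q ≤ qPoch q q k := by
  have hsum := summable_abs_log q q hq hq
  have hpos : ∀ j : ℕ, 0 < 1 - q * q ^ j := one_sub_pos' q q hq hq
  have heq : qPoch q q k = Real.exp (∑ i ∈ Finset.range k, Real.log (1 - q * q ^ i)) := by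
    rw [Real.exp_sum, qPoch]
    exact Finset.prod_congr rfl fun i _ => (Real.exp_log (hpos i)).symm
  rw [heq, qC]
  apply Real.exp_le_exp.2
  have h1 : ∀ i ∈ Finset.range k, -|Real.log (1 - q * q ^ i)| ≤ Real.log (1 - q * q ^ i) :=
    fun i _ => neg_abs_le _
  calc -(∑' j : ℕ, |Real.log (1 - q * q ^ j)|)
      ≤ -(∑ i ∈ Finset.range k, |Real.log (1 - q * q ^ i)|) := by
        apply neg_le_neg
        exact Summable.sum_le_tsum _ (fun i _ => abs_nonneg _) hsum
    _ = ∑ i ∈ Finset.range k, -|Real.log (1 - q * q ^ i)| := by rw [Finset.sum_neg_distrib]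
    _ ≤ _ := Finset.sum_le_sum h1

lemma qPoch_pos (q : ℝ) (hq : |q| < 1) (k : ℕ) : 0 < qPoch q q k :=
  lt_of_lt_of_le (qC_pos q) (qC_le_qPoch q hq k)

lemma summable_euler (q y : ℝ) (hq : |q| < 1) (hy : |y| < 1) :
    Summable (fun k : ℕ => y ^ k / qPoch q q k) := by
  apply Summable.of_abs
  have hgeo := (summable_geometric_of_lt_one (abs_nonneg y) hy).mul_left (qC q)⁻¹
  refine Summable.of_nonneg_of_le (fun k => abs_nonneg _) (fun k => ?_) hgeo
  rw [abs_div, abs_pow, abs_of_pos (qPoch_pos q hq k)]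
  rw [div_le_iff₀ (qPoch_pos q hq k)]
  have hc := qC_pos q
  calc |y| ^ k = (qC q)⁻¹ * |y| ^ k * qC q := by field_simp
    _ ≤ (qC q)⁻¹ * |y| ^ k * qPoch q q k := by
        apply mul_le_mul_of_nonneg_left (qC_le_qPoch q hq k)
        positivity

lemma funct_eq (q y : ℝ) (hq : |q| < 1) (hy : |y| < 1) :
    ∑' k : ℕ, (q * y) ^ k / qPoch q q k = (1 - y) * ∑' k : ℕ, y ^ k / qPoch q q k := by
  have hqy : |q * y| < 1 := by
    rw [abs_mul]
    nlinarith [abs_nonneg q, abs_nonneg y]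
  have hs1 : Summable (fun k : ℕ => y ^ k / qPoch q q k) := summable_euler q y hq hy
  have hs2 : Summable (fun k : ℕ => (q * y) ^ k / qPoch q q k) := summable_euler q (q * y) hq hqy
  have hqk : ∀ k : ℕ, (1 : ℝ) - q * q ^ k ≠ 0 := fun k => (one_sub_pos' q q hq hq k).ne'
  have hPk : ∀ k : ℕ, qPoch q q k ≠ 0 := fun k => (qPoch_pos q hq k).ne'
  have hD : ∀ k : ℕ, y ^ (k + 1) / qPoch q q (k + 1) - (q * y) ^ (k + 1) / qPoch q q (k + 1)
      = y * (y ^ k / qPoch q q k) := by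
    intro k
    have hP : qPoch q q (k + 1) = qPoch q q k * (1 - q * q ^ k) := Finset.prod_range_succ _ _
    rw [hP, div_sub_div_same]
    have hnum : y ^ (k + 1) - (q * y) ^ (k + 1) = (y * y ^ k) * (1 - q * q ^ k) := by ring
    rw [hnum, mul_div_mul_right _ _ (hqk k), mul_div_assoc]
  have h0 : qPoch q q 0 = 1 := by simp [qPoch]
  have key : (∑' k : ℕ, y ^ k / qPoch q q k) - ∑' k : ℕ, (q * y) ^ k / qPoch q q k
      = y * ∑' k : ℕ, y ^ k / qPoch q q k := by
    rw [← Summable.tsum_sub hs1 hs2]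
    rw [Summable.tsum_eq_zero_add (hs1.sub hs2)]
    simp only [pow_zero, h0, div_one, sub_self, zero_add]
    rw [← tsum_mul_left]
    exact tsum_congr hD
  linarith [key]

lemma abs_pow_mul_lt (q x : ℝ) (hq : |q| < 1) (hx : |x| < 1) (n : ℕ) : |q ^ n * x| < 1 := by
  rw [abs_mul, abs_pow]
  nlinarith [pow_le_one₀ (abs_nonneg q) hq.le (n := n), abs_nonneg x,
    pow_nonneg (abs_nonneg q) n]

lemma iter_eq (q x : ℝ) (hq : |q| < 1) (hx : |x| < 1) (n : ℕ) :
    ∑' k : ℕ, (q ^ n * x) ^ k / qPoch q q k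
      = qPoch x q n * ∑' k : ℕ, x ^ k / qPoch q q k := by
  induction n with
  | zero => simp [qPoch]
  | succ n ih =>
    have h1 : q ^ (n + 1) * x = q * (q ^ n * x) := by ring
    have hP : qPoch x q (n + 1) = qPoch x q n * (1 - x * q ^ n) :=
      Finset.prod_range_succ _ _
    rw [h1, funct_eq q (q ^ n * x) hq (abs_pow_mul_lt q x hq hx n), ih, hP]
    ring

lemma tail_bound (q x y : ℝ) (hq : |q| < 1) (hx : |x| < 1) (hy : |y| ≤ |x|) :
    |(∑' k : ℕ, y ^ k / qPoch q q k) - 1| ≤ |y| * ((qC q)⁻¹ * (1 - |x|)⁻¹) := by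
  have hy1 : |y| < 1 := lt_of_le_of_lt hy hx
  have hs1 : Summable (fun k : ℕ => y ^ k / qPoch q q k) := summable_euler q y hq hy1
  have h0 : qPoch q q 0 = 1 := by simp [qPoch]
  have hshift : Summable (fun k : ℕ => y ^ (k + 1) / qPoch q q (k + 1)) :=
    hs1.comp_injective (add_left_injective 1)
  rw [Summable.tsum_eq_zero_add hs1]
  simp only [pow_zero, h0, div_one, add_sub_cancel_left]
  have hgeo : Summable (fun k : ℕ => |y| * (qC q)⁻¹ * |x| ^ k) :=
    (summable_geometric_of_lt_one (abs_nonneg x) hx).mul_left _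
  have hbound : ∀ k : ℕ, |y ^ (k + 1) / qPoch q q (k + 1)| ≤ |y| * (qC q)⁻¹ * |x| ^ k := by
    intro k
    rw [abs_div, abs_pow, abs_of_pos (qPoch_pos q hq (k + 1)), pow_succ']
    rw [div_le_iff₀ (qPoch_pos q hq (k + 1))]
    have hc := qC_pos q
    have h1 : |y| ^ k ≤ |x| ^ k := pow_le_pow_left₀ (abs_nonneg y) hy k
    calc |y| * |y| ^ k ≤ |y| * |x| ^ k := by
          apply mul_le_mul_of_nonneg_left h1 (abs_nonneg y)
      _ = |y| * (qC q)⁻¹ * |x| ^ k * qC q := by field_simp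
      _ ≤ |y| * (qC q)⁻¹ * |x| ^ k * qPoch q q (k + 1) := by
          apply mul_le_mul_of_nonneg_left (qC_le_qPoch q hq (k + 1))
          positivity
  calc |∑' k : ℕ, y ^ (k + 1) / qPoch q q (k + 1)|
      ≤ ∑' k : ℕ, |y ^ (k + 1) / qPoch q q (k + 1)| := by
        have := norm_tsum_le_tsum_norm (f := fun k : ℕ => y ^ (k + 1) / qPoch q q (k + 1))
          (by simpa only [Real.norm_eq_abs] using hshift.abs)
        simpa only [Real.norm_eq_abs] using this
    _ ≤ ∑' k : ℕ, |y| * (qC q)⁻¹ * |x| ^ k := by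
        apply Summable.tsum_le_tsum hbound (hshift.abs) hgeo
    _ = |y| * (qC q)⁻¹ * (1 - |x|)⁻¹ := by
        rw [tsum_mul_left, tsum_geometric_of_lt_one (abs_nonneg x) hx]
    _ = |y| * ((qC q)⁻¹ * (1 - |x|)⁻¹) := by ring

/-- Euler's identity: `1/(x;q)_∞ = ∑_{k≥0} x^k / (q;q)_k` for `|q| < 1`, `|x| < 1`. -/
theorem euler_qExp (q x : ℝ) (hq : |q| < 1) (hx : |x| < 1) :
    1 / qPochInf x q = ∑' k : ℕ, x ^ k / qPoch q q k := by
  set F := ∑' k : ℕ, x ^ k / qPoch q q k with hF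
  set M := (qC q)⁻¹ * (1 - |x|)⁻¹ with hM
  have h1 : Filter.Tendsto (fun n : ℕ => ∑' k : ℕ, (q ^ n * x) ^ k / qPoch q q k)
      Filter.atTop (𝓝 1) := by
    rw [← tendsto_sub_nhds_zero_iff]
    apply squeeze_zero_norm (fun n => ?_)
      (show Filter.Tendsto (fun n : ℕ => |x| * M * |q| ^ n) Filter.atTop (𝓝 0) by
        simpa using (tendsto_pow_atTop_nhds_zero_of_lt_one (abs_nonneg q) hq).const_mul (|x| * M))
    have hyx : |q ^ n * x| ≤ |x| := by
      rw [abs_mul, abs_pow]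
      nlinarith [pow_le_one₀ (abs_nonneg q) hq.le (n := n), abs_nonneg x,
        pow_nonneg (abs_nonneg q) n]
    have := tail_bound q x (q ^ n * x) hq hx hyx
    rw [abs_mul, abs_pow] at this
    calc ‖(∑' k : ℕ, (q ^ n * x) ^ k / qPoch q q k) - 1‖
        ≤ |q| ^ n * |x| * M := this
      _ = |x| * M * |q| ^ n := by ring
  have h2 : (fun n : ℕ => ∑' k : ℕ, (q ^ n * x) ^ k / qPoch q q k)
      = fun n : ℕ => qPoch x q n * F := funext (iter_eq q x hq hx)
  rw [h2] at h1
  have h3 : Filter.Tendsto (fun n : ℕ => qPoch x q n * F) Filter.atTop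
      (𝓝 (qPochInf x q * F)) := by
    have := ((hasProd_one_sub q x hq hx).tendsto_prod_nat).mul_const F
    exact this
  have key : qPochInf x q * F = 1 := tendsto_nhds_unique h3 h1
  have hne : qPochInf x q ≠ 0 := (qPochInf_pos q x hq hx).ne'
  rw [div_eq_iff hne]
  linarith [key]
end

section
/- For |q| < 1, the infinite q-Pochhammer symbol has the expansion (x;q)_∞ = ∑_{k=0}^∞ (-1)^k q^{k(k-1)/2} x^k / (q;q)_k (Euler's second identity), valid for all x. -/
open Filter Topology
set_option maxHeartbeats 1000000

lemma qPoch_succ (a q : ℝ) (k : ℕ) :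
    qPoch a q (k + 1) = qPoch a q k * (1 - a * q ^ k) :=
  Finset.prod_range_succ _ _

lemma qPoch_ne_zero {q : ℝ} (hq : |q| < 1) (k : ℕ) : qPoch q q k ≠ 0 := by
  refine Finset.prod_ne_zero_iff.2 fun i _ => ?_
  have h : |q * q ^ i| < 1 := by
    rw [abs_mul, abs_pow]
    calc |q| * |q| ^ i ≤ |q| * 1 := by
          exact mul_le_mul_of_nonneg_left (pow_le_one₀ (abs_nonneg q) hq.le) (abs_nonneg q)
      _ < 1 := by simpa using hq
  intro h0
  have : q * q ^ i = 1 := by linarith [sub_eq_zero.mp h0]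
  rw [this] at h
  simp at h

/-- coefficient of Euler's series -/
noncomputable def eulerA (q : ℝ) (k : ℕ) : ℝ :=
  (-1) ^ k * q ^ (k * (k - 1) / 2) / qPoch q q k

lemma euler_expo (k : ℕ) : (k + 1) * k / 2 = k * (k - 1) / 2 + k := by
  have h : (k + 1) * k = k * (k - 1) + 2 * k := by
    cases k with
    | zero => simp
    | succ n => simp [Nat.succ_sub_one]; ring
  rw [h, Nat.add_mul_div_left _ _ (by norm_num : 0 < 2)]

lemma eulerA_succ {q : ℝ} (hq : |q| < 1) (k : ℕ) :
    eulerA q (k + 1) * (1 - q ^ (k + 1)) = -(eulerA q k * q ^ k) := by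
  have hD := qPoch_ne_zero hq k
  have hD1 := qPoch_ne_zero hq (k + 1)
  have hfac : qPoch q q (k + 1) = qPoch q q k * (1 - q * q ^ k) := qPoch_succ q q (k + 1 - 1)
  have hne : (1 - q * q ^ k) ≠ 0 := by
    intro h0
    rw [hfac, h0, mul_zero] at hD1
    exact hD1 rfl
  have hq1 : (1 : ℝ) - q ^ (k + 1) = 1 - q * q ^ k := by ring
  unfold eulerA
  rw [hq1, Nat.add_sub_cancel, euler_expo, pow_add, hfac]
  field_simp
  ring

lemma eulerA_summable_norm {q : ℝ} (hq : |q| < 1) (y : ℝ) :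
    Summable (fun k => ‖eulerA q k‖ * |y| ^ k) := by
  have hq0 : (0:ℝ) ≤ |q| := abs_nonneg q
  have htend : Tendsto (fun k : ℕ => |q| ^ k) atTop (𝓝 0) :=
    tendsto_pow_atTop_nhds_zero_of_lt_one hq0 hq
  have hc : (0:ℝ) < 1 / (4 * (|y| + 1)) := by positivity
  have hev : ∀ᶠ k : ℕ in atTop, |q| ^ k < 1 / (4 * (|y| + 1)) :=
    htend.eventually (gt_mem_nhds hc)
  refine summable_of_ratio_norm_eventually_le (r := 1/2) (by norm_num) ?_
  filter_upwards [hev] with k hk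
  have hy1 : (1:ℝ) ≤ |y| + 1 := by linarith [abs_nonneg y]
  have hqk : |q| ^ k < 1 / 4 := by
    calc |q| ^ k < 1 / (4 * (|y| + 1)) := hk
      _ ≤ 1 / 4 := by
          apply div_le_div_of_nonneg_left (by norm_num) (by norm_num)
          nlinarith
  have hqk1 : |q| ^ (k + 1) ≤ 1 / 2 := by
    calc |q| ^ (k+1) ≤ |q| ^ k := pow_le_pow_of_le_one hq0 hq.le (by omega)
      _ ≤ 1/2 := by linarith
  have hden : (1:ℝ)/2 ≤ |1 - q ^ (k + 1)| := by
    have : |q ^ (k+1)| ≤ 1/2 := by rwa [abs_pow]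
    have h2 := abs_sub_abs_le_abs_sub (1:ℝ) (q ^ (k+1))
    rw [abs_one] at h2
    linarith
  have hdenpos : (0:ℝ) < |1 - q ^ (k + 1)| := by linarith
  have hne : (1:ℝ) - q ^ (k + 1) ≠ 0 := by
    intro h0; rw [h0, abs_zero] at hdenpos; linarith
  -- norm of eulerA (k+1)
  have hrec := eulerA_succ hq k
  have hnorm : |eulerA q (k+1)| * |1 - q ^ (k+1)| = |eulerA q k| * |q| ^ k := by
    rw [← abs_mul, hrec, abs_neg, abs_mul, abs_pow]
  have hA1 : |eulerA q (k+1)| = |eulerA q k| * |q| ^ k / |1 - q ^ (k+1)| := by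
    rw [eq_div_iff (by linarith : |1 - q ^ (k+1)| ≠ 0)]
    exact hnorm
  simp only [Real.norm_eq_abs]
  rw [abs_of_nonneg (by positivity : (0:ℝ) ≤ |eulerA q (k+1)| * |y| ^ (k+1)),
      abs_of_nonneg (by positivity : (0:ℝ) ≤ |eulerA q k| * |y| ^ k), hA1]
  have key : |q| ^ k * |y| / |1 - q ^ (k + 1)| ≤ 1 / 2 := by
    have hnum : |q| ^ k * |y| ≤ 1 / 4 := by
      have h5 : |q| ^ k * |y| ≤ (1 / (4 * (|y| + 1))) * (|y|+1) := by
        apply mul_le_mul hk.le (by linarith) (abs_nonneg y) (by positivity)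
      have h6 : (1 / (4 * (|y| + 1))) * (|y|+1) = 1/4 := by
        field_simp
      linarith
    calc |q| ^ k * |y| / |1 - q ^ (k + 1)| ≤ (1/4) / (1/2) :=
          div_le_div₀ (by norm_num) hnum (by norm_num) hden
      _ = 1/2 := by norm_num
  calc |eulerA q k| * |q| ^ k / |1 - q ^ (k + 1)| * |y| ^ (k + 1)
      = (|eulerA q k| * |y| ^ k) * (|q| ^ k * |y| / |1 - q ^ (k + 1)|) := by ring
    _ ≤ (|eulerA q k| * |y| ^ k) * (1/2) := by
        apply mul_le_mul_of_nonneg_left key (by positivity)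
    _ = 1/2 * (|eulerA q k| * |y| ^ k) := by ring

lemma eulerA_summable {q : ℝ} (hq : |q| < 1) (y : ℝ) :
    Summable (fun k => eulerA q k * y ^ k) := by
  apply Summable.of_norm
  refine (eulerA_summable_norm hq y).congr fun k => ?_
  rw [norm_mul, norm_pow, Real.norm_eq_abs y]

/-- The Euler series. -/
noncomputable def eulerF (q x : ℝ) : ℝ := ∑' k : ℕ, eulerA q k * x ^ k

lemma eulerF_feq {q : ℝ} (hq : |q| < 1) (x : ℝ) :
    eulerF q x = (1 - x) * eulerF q (q * x) := by
  set b : ℕ → ℝ := fun k => eulerA q k * q ^ k * x ^ (k + 1) with hb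
  set d : ℕ → ℝ := fun k => eulerA q k * x ^ k - (1 - x) * (eulerA q k * (q * x) ^ k) with hd
  have hsum1 := eulerA_summable hq x
  have hsum2 := eulerA_summable hq (q * x)
  have hsumd : Summable d := hsum1.sub (hsum2.mul_left (1 - x))
  have hsumb : Summable b := by
    refine ((hsum2.mul_right x).congr fun k => ?_)
    simp only [hb, mul_pow, pow_succ]
    ring
  -- partial sums of d telescope to b
  have hpartial : ∀ n : ℕ, ∑ k ∈ Finset.range (n + 1), d k = b n := by
    intro n
    induction n with
    | zero =>
        simp [hd, hb, eulerA]
        norm_num [qPoch]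
    | succ n ih =>
        rw [Finset.sum_range_succ, ih]
        have hrec := eulerA_succ hq n
        simp only [hd, hb]
        linear_combination (x ^ (n + 1)) * hrec
  -- hence tsum d = 0
  have htd : Tendsto (fun n => ∑ k ∈ Finset.range n, d k) atTop (𝓝 (∑' k, d k)) :=
    hsumd.hasSum.tendsto_sum_nat
  have htb : Tendsto b atTop (𝓝 0) := hsumb.tendsto_atTop_zero
  have htd0 : Tendsto (fun n => ∑ k ∈ Finset.range n, d k) atTop (𝓝 0) := by
    rw [← tendsto_add_atTop_iff_nat 1]
    exact htb.congr fun n => (hpartial n).symm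
  have hd0 : ∑' k, d k = 0 := tendsto_nhds_unique htd htd0
  have : eulerF q x - (1 - x) * eulerF q (q * x) = ∑' k, d k := by
    unfold eulerF
    rw [← tsum_mul_left, ← Summable.tsum_sub hsum1 (hsum2.mul_left (1 - x))]
  rw [hd0] at this
  linarith

lemma eulerF_iter {q : ℝ} (hq : |q| < 1) (x : ℝ) (n : ℕ) :
    eulerF q x = qPoch x q n * eulerF q (q ^ n * x) := by
  induction n with
  | zero => simp [qPoch]
  | succ n ih =>
      rw [ih, eulerF_feq hq (q ^ n * x), qPoch_succ]
      rw [show q * (q ^ n * x) = q ^ (n + 1) * x by ring,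
          show (1:ℝ) - q ^ n * x = 1 - x * q ^ n by ring]
      ring

lemma eulerF_tendsto_one {q : ℝ} (hq : |q| < 1) (x : ℝ) :
    Tendsto (fun n : ℕ => eulerF q (q ^ n * x)) atTop (𝓝 1) := by
  have hq0 : (0:ℝ) ≤ |q| := abs_nonneg q
  -- summability of shifted norms
  have hs : Summable (fun k => ‖eulerA q (k + 1)‖ * |x| ^ (k + 1)) := by
    exact ((summable_nat_add_iff 1).2 (eulerA_summable_norm hq x))
  set M : ℝ := ∑' k : ℕ, ‖eulerA q (k + 1)‖ * |x| ^ (k + 1) with hM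
  have hbound : ∀ n : ℕ, |eulerF q (q ^ n * x) - 1| ≤ |q| ^ n * M := by
    intro n
    set y := q ^ n * x with hy
    have hsy := eulerA_summable hq y
    have h0 : eulerF q y = 1 + ∑' k : ℕ, eulerA q (k + 1) * y ^ (k + 1) := by
      unfold eulerF
      rw [Summable.tsum_eq_zero_add hsy]
      norm_num [eulerA, qPoch]
    have hsy1 : Summable (fun k => eulerA q (k + 1) * y ^ (k + 1)) :=
      (summable_nat_add_iff 1).2 hsy
    have htri : |∑' k : ℕ, eulerA q (k + 1) * y ^ (k + 1)| ≤
        ∑' k : ℕ, ‖eulerA q (k + 1) * y ^ (k + 1)‖ := by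
      have := norm_tsum_le_tsum_norm (f := fun k => eulerA q (k + 1) * y ^ (k + 1)) ?_
      · simpa using this
      · refine ((summable_nat_add_iff 1).2 (eulerA_summable_norm hq y)).congr fun k => ?_
        simp [norm_mul, abs_pow]
    have hterm : ∀ k : ℕ, ‖eulerA q (k + 1) * y ^ (k + 1)‖ ≤
        |q| ^ n * (‖eulerA q (k + 1)‖ * |x| ^ (k + 1)) := by
      intro k
      rw [norm_mul, norm_pow, Real.norm_eq_abs y, hy, abs_mul, abs_pow, mul_pow]
      have h1 : (|q| ^ n) ^ (k + 1) ≤ |q| ^ n :=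
        pow_le_of_le_one (by positivity) (pow_le_one₀ hq0 hq.le) (Nat.succ_ne_zero k)
      calc ‖eulerA q (k+1)‖ * ((|q| ^ n) ^ (k+1) * |x| ^ (k+1))
          ≤ ‖eulerA q (k+1)‖ * (|q| ^ n * |x| ^ (k+1)) := by
            apply mul_le_mul_of_nonneg_left (by
              apply mul_le_mul_of_nonneg_right h1 (by positivity)) (norm_nonneg _)
        _ = |q| ^ n * (‖eulerA q (k+1)‖ * |x| ^ (k+1)) := by ring
    have hsum_rhs : Summable (fun k => |q| ^ n * (‖eulerA q (k + 1)‖ * |x| ^ (k + 1))) :=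
      hs.mul_left _
    have hsum_lhs : Summable (fun k => ‖eulerA q (k + 1) * y ^ (k + 1)‖) := by
      refine ((summable_nat_add_iff 1).2 (eulerA_summable_norm hq y)).congr fun k => ?_
      simp [norm_mul, abs_pow]
    have hle : ∑' k : ℕ, ‖eulerA q (k + 1) * y ^ (k + 1)‖ ≤
        ∑' k : ℕ, |q| ^ n * (‖eulerA q (k + 1)‖ * |x| ^ (k + 1)) :=
      Summable.tsum_le_tsum hterm hsum_lhs hsum_rhs
    have heq : ∑' k : ℕ, |q| ^ n * (‖eulerA q (k + 1)‖ * |x| ^ (k + 1)) = |q| ^ n * M := by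
      rw [hM, tsum_mul_left]
    rw [h0]
    calc |1 + (∑' k : ℕ, eulerA q (k + 1) * y ^ (k + 1)) - 1|
        = |∑' k : ℕ, eulerA q (k + 1) * y ^ (k + 1)| := by
          congr 1
          ring
      _ ≤ ∑' k : ℕ, ‖eulerA q (k + 1) * y ^ (k + 1)‖ := htri
      _ ≤ ∑' k : ℕ, |q| ^ n * (‖eulerA q (k + 1)‖ * |x| ^ (k + 1)) := hle
      _ = |q| ^ n * M := heq
  have htends : Tendsto (fun n : ℕ => |q| ^ n * M) atTop (𝓝 0) := by
    simpa using (tendsto_pow_atTop_nhds_zero_of_lt_one hq0 hq).mul_const M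
  have habs : Tendsto (fun n : ℕ => |eulerF q (q ^ n * x) - 1|) atTop (𝓝 0) :=
    squeeze_zero (fun n => abs_nonneg _) hbound htends
  rw [← tendsto_sub_nhds_zero_iff]
  exact (tendsto_zero_iff_abs_tendsto_zero _).2 habs

lemma qPochInf_multipliable {q : ℝ} (hq : |q| < 1) (x : ℝ) :
    Multipliable (fun j : ℕ => 1 - x * q ^ j) := by
  have hq0 : (0:ℝ) ≤ |q| := abs_nonneg q
  -- choose N with |x| * |q|^j ≤ 1/2 for j ≥ N
  have htend : Tendsto (fun j : ℕ => |x| * |q| ^ j) atTop (𝓝 0) := by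
    simpa using (tendsto_pow_atTop_nhds_zero_of_lt_one hq0 hq).const_mul |x|
  have hev : ∀ᶠ j : ℕ in atTop, |x| * |q| ^ j < 1/2 :=
    htend.eventually (gt_mem_nhds (by norm_num))
  obtain ⟨N, hN⟩ := eventually_atTop.1 hev
  -- tail is positive with summable log
  have hsmall : ∀ n : ℕ, |x * q ^ (n + N)| < 1/2 := by
    intro n
    rw [abs_mul, abs_pow]
    exact hN (n + N) (Nat.le_add_left N n)
  have hpos : ∀ n : ℕ, (0:ℝ) < 1 - x * q ^ (n + N) := by
    intro n
    have := abs_lt.1 (hsmall n)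
    linarith [this.2]
  have hlogsum : Summable (fun n : ℕ => Real.log (1 - x * q ^ (n + N))) := by
    apply Summable.of_abs
    have hgeom : Summable (fun n : ℕ => 2 * (|x| * |q| ^ N) * |q| ^ n) :=
      (summable_geometric_of_lt_one hq0 hq).mul_left _
    refine Summable.of_nonneg_of_le (fun n => abs_nonneg _) (fun n => ?_) hgeom
    set t := x * q ^ (n + N) with ht
    have htabs : |t| < 1/2 := hsmall n
    have ht1 : |t| < 1 := by linarith
    have hbd := Real.abs_log_sub_add_sum_range_le ht1 1
    simp only [Finset.range_one, Finset.sum_singleton, pow_one] at hbd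
    norm_num at hbd
    rw [← sq_abs t] at hbd
    -- hbd normalized
    have h2 : |t| ^ 2 / (1 - |t|) ≤ |t| := by
      rw [div_le_iff₀ (by linarith)]
      nlinarith [abs_nonneg t]
    have h3 : |Real.log (1 - t)| ≤ 2 * |t| := by
      have := abs_sub_abs_le_abs_sub (Real.log (1 - t)) (-(t/1))
      have h4 : |Real.log (1 - t) - -(t/1)| ≤ |t| := by
        calc |Real.log (1 - t) - -(t/1)| = |t + Real.log (1 - t)| := by
              rw [sub_neg_eq_add, add_comm]; norm_num
          _ ≤ |t| ^ 2 / (1 - |t|) := hbd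
          _ ≤ |t| := h2
      have h5 : |(-(t/1))| = |t| := by simp
      calc |Real.log (1 - t)| ≤ |Real.log (1 - t) - -(t/1)| + |(-(t/1))| := by
            have := abs_sub_abs_le_abs_sub (Real.log (1 - t)) (-(t/1)); nlinarith [abs_nonneg (Real.log (1-t) - -(t/1))]
        _ ≤ |t| + |t| := by rw [h5]; linarith
        _ = 2 * |t| := by ring
    calc |Real.log (1 - t)| ≤ 2 * |t| := h3
      _ = 2 * (|x| * |q| ^ (n + N)) := by rw [ht, abs_mul, abs_pow]
      _ = 2 * (|x| * |q| ^ N) * |q| ^ n := by rw [pow_add]; ring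
  have htail : Multipliable (fun n : ℕ => 1 - x * q ^ (n + N)) := by
    exact Real.multipliable_of_summable_log hpos hlogsum
  exact Multipliable.comp_nat_add htail

/-- Euler's second identity:
`(x;q)_∞ = ∑_{k≥0} (-1)^k q^{k(k-1)/2} x^k / (q;q)_k` for `|q| < 1` and all `x`. -/
theorem euler_qExp' (q : ℝ) (hq : |q| < 1) (x : ℝ) :
    qPochInf x q = ∑' k : ℕ, (-1) ^ k * q ^ (k * (k - 1) / 2) * x ^ k / qPoch q q k := by
  have hmul := qPochInf_multipliable hq x
  have h1 : Tendsto (fun n => ∏ i ∈ Finset.range n, (1 - x * q ^ i)) atTop (𝓝 (qPochInf x q)) :=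
    hmul.hasProd.tendsto_prod_nat
  have h2 : Tendsto (fun n : ℕ => qPoch x q n * eulerF q (q ^ n * x)) atTop
      (𝓝 (qPochInf x q * 1)) :=
    h1.mul (eulerF_tendsto_one hq x)
  have h3 : Tendsto (fun n : ℕ => qPoch x q n * eulerF q (q ^ n * x)) atTop (𝓝 (eulerF q x)) := by
    simp_rw [← eulerF_iter hq x]
    exact tendsto_const_nhds
  have h4 : eulerF q x = qPochInf x q := by
    have := tendsto_nhds_unique h3 h2
    rw [this, mul_one]
  rw [← h4]
  unfold eulerF
  refine tsum_congr fun k => ?_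
  unfold eulerA
  ring
end

section
/- Define φ_ν(n) = n(n-2)/2 - ν²/2, ψ(n) = n(n+ν-1), and g_ν : ℤ → ℚ by g_ν(n) = nν for n ≥ 1; g_ν(n) = ψ(n) for 0 ≥ n ≥ -ν; g_ν(n) = φ_ν(n) for n ≤ -ν-1 with n+ν even; and g_ν(n) = φ_ν(n) + 3/2 for n ≤ -ν-1 with n+ν odd, where ν is a fixed nonnegative integer. Then for all integers n and all positive integers k, l, the quantity g̃ = g_ν(n) + g_ν(n+2k+l) - g_ν(n+2k) - g_ν(n+l) satisfies g̃ = 0 if n ≥ 0 and g̃ > 0 if n ≤ -1. -/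
/-- For the leading q-exponent `g_ν` of the q-Bessel function `J_ν(q^n)`,
the combination `g̃ = g_ν(n) + g_ν(n+2k+l) - g_ν(n+2k) - g_ν(n+l)` vanishes
for `n ≥ 0` and is strictly positive for `n ≤ -1`. -/
theorem gnu_combination (ν : ℕ) (g : ℤ → ℚ)
    (hg : ∀ n : ℤ, g n =
      if 1 ≤ n then (n : ℚ) * ν
      else if -(ν : ℤ) ≤ n then (n : ℚ) * ((n : ℚ) + ν - 1)
      else if Even (n + ν) then (n : ℚ) * ((n : ℚ) - 2) / 2 - (ν : ℚ) ^ 2 / 2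
      else (n : ℚ) * ((n : ℚ) - 2) / 2 - (ν : ℚ) ^ 2 / 2 + 3 / 2) :
    ∀ n k l : ℤ, 0 < k → 0 < l →
      (0 ≤ n → g n + g (n + 2 * k + l) - g (n + 2 * k) - g (n + l) = 0) ∧
      (n ≤ -1 → 0 < g n + g (n + 2 * k + l) - g (n + 2 * k) - g (n + l)) := by
  have hlin : ∀ m : ℤ, 0 ≤ m → g m = (m : ℚ) * ν := by
    intro m hm
    rcases eq_or_lt_of_le hm with h | h
    · subst h
      rw [hg, if_neg (by omega), if_pos (by omega)]
      norm_num
    · rw [hg, if_pos (by omega)]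
  have key : ∀ y : ℤ,
      0 ≤ g y + g (y + 3) - g (y + 1) - g (y + 2) ∧
      (y ≤ -1 → 0 < g y + g (y + 3) - g (y + 1) - g (y + 2)) := by
    intro y
    rcases le_or_gt 0 y with h0 | h0
    · have e : g y + g (y + 3) - g (y + 1) - g (y + 2) = 0 := by
        rw [hlin y h0, hlin _ (by omega), hlin _ (by omega), hlin _ (by omega)]
        push_cast; ring
      exact ⟨le_of_eq e.symm, fun h => absurd h (by omega)⟩
    · suffices hpos : 0 < g y + g (y + 3) - g (y + 1) - g (y + 2) by
        exact ⟨le_of_lt hpos, fun _ => hpos⟩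
      rcases le_or_gt (-(ν:ℤ)) y with hm | hm
      · -- middle region: -ν ≤ y ≤ -1 (so ν ≥ 1)
        rcases eq_or_lt_of_le (show y ≤ -1 by omega) with he | hlt
        · -- y = -1
          subst he
          have e0 : g (-1) = (-1 : ℚ) * ((-1 : ℚ) + ν - 1) := by
            rw [hg, if_neg (by omega), if_pos (by omega)]
            push_cast; ring
          have e1 : g (-1 + 1) = 0 := by
            rw [hg, if_neg (by omega), if_pos (by omega)]
            norm_num
          have e2 : g (-1 + 2) = (ν : ℚ) := by
            rw [hg, if_pos (by omega)]; norm_num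
          have e3 : g (-1 + 3) = 2 * (ν : ℚ) := by
            rw [hg, if_pos (by omega)]; push_cast; ring
          rw [e0, e1, e2, e3]; ring_nf; norm_num
        · -- -ν ≤ y ≤ -2 : all four points middle (y+3 = 1 handled too)
          have e0 : g y = (y : ℚ) * ((y : ℚ) + ν - 1) := by
            rw [hg, if_neg (by omega), if_pos (by omega)]
          have e1 : g (y + 1) = ((y : ℚ) + 1) * (((y : ℚ) + 1) + ν - 1) := by
            rw [hg, if_neg (by omega), if_pos (by omega)]; push_cast; ring
          have e2 : g (y + 2) = ((y : ℚ) + 2) * (((y : ℚ) + 2) + ν - 1) := by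
            rw [hg, if_neg (by omega), if_pos (by omega)]; push_cast; ring
          have e3 : g (y + 3) = ((y : ℚ) + 3) * (((y : ℚ) + 3) + ν - 1) := by
            rw [hg]
            rcases le_or_gt 1 (y + 3) with h3 | h3
            · rw [if_pos h3]
              have hy2 : y = -2 := by omega
              subst hy2; push_cast; ring
            · rw [if_neg (by omega), if_pos (by omega)]; push_cast; ring
          rw [e0, e1, e2, e3]; ring_nf; norm_num
      · -- bottom region: y ≤ -ν - 1
        rcases eq_or_lt_of_le (show y ≤ -(ν:ℤ) - 1 by omega) with he | h1
        · -- y = -ν - 1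
          rcases Nat.eq_zero_or_pos ν with hν | hν
          · subst hν
            have hy : y = -1 := by omega
            subst hy
            have e0 : g (-1) = 3 := by
              rw [hg, if_neg (by omega), if_neg (by omega),
                if_neg (by rw [Int.even_iff]; omega)]
              norm_num
            have e1 : g (-1 + 1) = 0 := by
              rw [hg, if_neg (by omega), if_pos (by omega)]; norm_num
            have e2 : g (-1 + 2) = 0 := by
              rw [hg, if_pos (by omega)]; norm_num
            have e3 : g (-1 + 3) = 0 := by
              rw [hg, if_pos (by omega)]; norm_num
            rw [e0, e1, e2, e3]; norm_num
          · -- ν ≥ 1, y = -ν - 1, F = 5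
            subst he
            have e0 : g (-(ν:ℤ) - 1) = 2 * (ν:ℚ) + 3 := by
              rw [hg, if_neg (by omega), if_neg (by omega),
                if_neg (by rw [Int.even_iff]; omega)]
              push_cast; ring
            have e1 : g (-(ν:ℤ) - 1 + 1) = (ν:ℚ) := by
              rw [hg, if_neg (by omega), if_pos (by omega)]; push_cast; ring
            have e2 : g (-(ν:ℤ) - 1 + 2) = 0 := by
              rw [hg, if_neg (by omega), if_pos (by omega)]; push_cast; ring
            have e3 : g (-(ν:ℤ) - 1 + 3) = 2 - (ν:ℚ) := by
              rw [hg]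
              rcases le_or_gt 1 (-(ν:ℤ) - 1 + 3) with h3 | h3
              · rw [if_pos h3]
                have hν1 : ν = 1 := by omega
                subst hν1; push_cast; ring
              · rw [if_neg (by omega), if_pos (by omega)]; push_cast; ring
            rw [e0, e1, e2, e3]; ring_nf; norm_num
        · rcases eq_or_lt_of_le (show y ≤ -(ν:ℤ) - 2 by omega) with he | h2
          · -- y = -ν - 2, F = 1
            subst he
            have e0 : g (-(ν:ℤ) - 2) = 3 * (ν:ℚ) + 4 := by
              rw [hg, if_neg (by omega), if_neg (by omega),
                if_pos (by rw [Int.even_iff]; omega)]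
              push_cast; ring
            have e1 : g (-(ν:ℤ) - 2 + 1) = 2 * (ν:ℚ) + 3 := by
              rw [hg, if_neg (by omega), if_neg (by omega),
                if_neg (by rw [Int.even_iff]; omega)]
              push_cast; ring
            have e2 : g (-(ν:ℤ) - 2 + 2) = (ν:ℚ) := by
              rw [hg, if_neg (by omega), if_pos (by omega)]; push_cast; ring
            have e3 : g (-(ν:ℤ) - 2 + 3) = 0 := by
              rw [hg]
              rcases le_or_gt 1 (-(ν:ℤ) - 2 + 3) with h3 | h3
              · rw [if_pos h3]
                have hν0 : ν = 0 := by omega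
                subst hν0; push_cast; ring
              · rw [if_neg (by omega), if_pos (by omega)]; push_cast; ring
            rw [e0, e1, e2, e3]; ring_nf; norm_num
          · rcases eq_or_lt_of_le (show y ≤ -(ν:ℤ) - 3 by omega) with he | h3
            · -- y = -ν - 3, F = 2
              subst he
              have e0 : g (-(ν:ℤ) - 3) = 4 * (ν:ℚ) + 9 := by
                rw [hg, if_neg (by omega), if_neg (by omega),
                  if_neg (by rw [Int.even_iff]; omega)]
                push_cast; ring
              have e1 : g (-(ν:ℤ) - 3 + 1) = 3 * (ν:ℚ) + 4 := by
                rw [hg, if_neg (by omega), if_neg (by omega),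
                  if_pos (by rw [Int.even_iff]; omega)]
                push_cast; ring
              have e2 : g (-(ν:ℤ) - 3 + 2) = 2 * (ν:ℚ) + 3 := by
                rw [hg, if_neg (by omega), if_neg (by omega),
                  if_neg (by rw [Int.even_iff]; omega)]
                push_cast; ring
              have e3 : g (-(ν:ℤ) - 3 + 3) = (ν:ℚ) := by
                rw [hg, if_neg (by omega), if_pos (by omega)]; push_cast; ring
              rw [e0, e1, e2, e3]; ring_nf; norm_num
            · -- y ≤ -ν - 4 : all four points bottom, F = 2
              rcases Int.even_or_odd (y + (ν:ℤ)) with hp | hp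
              · have e0 : g y = (y:ℚ) * ((y:ℚ) - 2) / 2 - (ν:ℚ)^2 / 2 := by
                  rw [hg, if_neg (by omega), if_neg (by omega), if_pos hp]
                have e1 : g (y + 1) =
                    ((y:ℚ)+1) * (((y:ℚ)+1) - 2) / 2 - (ν:ℚ)^2 / 2 + 3/2 := by
                  rw [hg, if_neg (by omega), if_neg (by omega),
                    if_neg (by rw [Int.even_iff] at hp ⊢; omega)]
                  push_cast; ring
                have e2 : g (y + 2) =
                    ((y:ℚ)+2) * (((y:ℚ)+2) - 2) / 2 - (ν:ℚ)^2 / 2 := by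
                  rw [hg, if_neg (by omega), if_neg (by omega),
                    if_pos (by rw [Int.even_iff] at hp ⊢; omega)]
                  push_cast; ring
                have e3 : g (y + 3) =
                    ((y:ℚ)+3) * (((y:ℚ)+3) - 2) / 2 - (ν:ℚ)^2 / 2 + 3/2 := by
                  rw [hg, if_neg (by omega), if_neg (by omega),
                    if_neg (by rw [Int.even_iff] at hp ⊢; omega)]
                  push_cast; ring
                rw [e0, e1, e2, e3]; ring_nf; norm_num
              · have e0 : g y = (y:ℚ) * ((y:ℚ) - 2) / 2 - (ν:ℚ)^2 / 2 + 3/2 := by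
                  rw [hg, if_neg (by omega), if_neg (by omega),
                    if_neg (by rw [Int.odd_iff] at hp; rw [Int.even_iff]; omega)]
                have e1 : g (y + 1) =
                    ((y:ℚ)+1) * (((y:ℚ)+1) - 2) / 2 - (ν:ℚ)^2 / 2 := by
                  rw [hg, if_neg (by omega), if_neg (by omega),
                    if_pos (by rw [Int.odd_iff] at hp; rw [Int.even_iff]; omega)]
                  push_cast; ring
                have e2 : g (y + 2) =
                    ((y:ℚ)+2) * (((y:ℚ)+2) - 2) / 2 - (ν:ℚ)^2 / 2 + 3/2 := by
                  rw [hg, if_neg (by omega), if_neg (by omega),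
                    if_neg (by rw [Int.odd_iff] at hp; rw [Int.even_iff]; omega)]
                  push_cast; ring
                have e3 : g (y + 3) =
                    ((y:ℚ)+3) * (((y:ℚ)+3) - 2) / 2 - (ν:ℚ)^2 / 2 := by
                  rw [hg, if_neg (by omega), if_neg (by omega),
                    if_pos (by rw [Int.odd_iff] at hp; rw [Int.even_iff]; omega)]
                  push_cast; ring
                rw [e0, e1, e2, e3]; ring_nf; norm_num
  have Dstep : ∀ y : ℤ, g (y + 2) - g y ≤ g (y + 3) - g (y + 1) := by
    intro y; linarith [(key y).1]
  have DstepS : ∀ y : ℤ, y ≤ -1 → g (y + 2) - g y < g (y + 3) - g (y + 1) := by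
    intro y hy; linarith [(key y).2 hy]
  have Dmono : ∀ (y m : ℤ), 0 ≤ m → g (y + 2) - g y ≤ g (y + m + 2) - g (y + m) := by
    have DmonoN : ∀ (y : ℤ) (j : ℕ),
        g (y + 2) - g y ≤ g (y + (j:ℤ) + 2) - g (y + (j:ℤ)) := by
      intro y j
      induction j with
      | zero => simp
      | succ j ih =>
          have h1 := Dstep (y + (j:ℤ))
          have ea : y + ((j:ℕ) + 1 : ℕ) + 2 = y + (j:ℤ) + 3 := by push_cast; ring
          have eb : y + ((j:ℕ) + 1 : ℕ) = y + (j:ℤ) + 1 := by push_cast; ring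
          rw [ea, eb]
          linarith
    intro y m hm
    have hm' : ((m.toNat : ℤ)) = m := Int.toNat_of_nonneg hm
    rw [← hm']
    exact DmonoN y m.toNat
  have DmonoS : ∀ (y m : ℤ), y ≤ -1 → 1 ≤ m →
      g (y + 2) - g y < g (y + m + 2) - g (y + m) := by
    intro y m hy hm
    have h1 := DstepS y hy
    have h2 := Dmono (y + 1) (m - 1) (by omega)
    have ea : y + 1 + (m - 1) + 2 = y + m + 2 := by ring
    have eb : y + 1 + (m - 1) = y + m := by ring
    have ec : y + 1 + 2 = y + 3 := by ring
    rw [ea, eb, ec] at h2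
    linarith
  intro n k l hk hl
  constructor
  · intro hn
    rw [hlin n hn, hlin _ (by omega), hlin _ (by omega), hlin _ (by omega)]
    push_cast; ring
  · intro hn
    have mainN : ∀ j : ℕ, g (n + l) - g n <
        g (n + 2 * ((j:ℤ) + 1) + l) - g (n + 2 * ((j:ℤ) + 1)) := by
      intro j
      induction j with
      | zero =>
          have h := DmonoS n l hn (by omega)
          have ea : n + 2 * (((0:ℕ):ℤ) + 1) + l = n + l + 2 := by push_cast; ring
          have eb : n + 2 * (((0:ℕ):ℤ) + 1) = n + 2 := by push_cast; ring
          rw [ea, eb]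
          linarith
      | succ j ih =>
          have h := Dmono (n + 2 * ((j:ℤ) + 1)) l (by omega)
          have ea : n + 2 * ((((j:ℕ) + 1 : ℕ):ℤ) + 1) + l
              = n + 2 * ((j:ℤ) + 1) + l + 2 := by push_cast; ring
          have eb : n + 2 * ((((j:ℕ) + 1 : ℕ):ℤ) + 1)
              = n + 2 * ((j:ℤ) + 1) + 2 := by push_cast; ring
          rw [ea, eb]
          linarith
    have hk1 : (((k - 1).toNat : ℤ)) = k - 1 := Int.toNat_of_nonneg (by omega)
    have h := mainN (k - 1).toNat
    rw [hk1] at h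
    have ea : n + 2 * (k - 1 + 1) + l = n + 2 * k + l := by ring
    have eb : n + 2 * (k - 1 + 1) = n + 2 * k := by ring
    rw [ea, eb] at h
    linarith
end

section
/- For 0 < q < 1 and an integer n ≤ 0, the infinite product (-(1-q)²·q^{2n}; q²)_∞ satisfies 1/(-(1-q)²q^{2n}; q²)_∞ = q^{n(n-1)}·(1/2 + O(q)) as q → 0⁺; that is, q^{-n(n-1)}/(-(1-q)²q^{2n}; q²)_∞ → 1/2 as q → 0⁺. -/
open Filter Real Set Finset

private lemma qpa_zpow_split (q : ℝ) (hq : q ≠ 0) (a : ℤ) (j : ℕ) :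
    q ^ (a + 2 * (j : ℤ)) = q ^ a * (q ^ 2) ^ j := by
  rw [zpow_add₀ hq]
  congr 1
  rw [zpow_mul, zpow_natCast]; norm_cast

private lemma qpa_pos {q : ℝ} (hq : 0 < q) (c : ℝ) (e : ℤ) :
    0 < 1 + c ^ 2 * q ^ e :=
  add_pos_of_pos_of_nonneg one_pos (mul_nonneg (sq_nonneg _) (zpow_pos hq _).le)

private lemma qpa_summable_log {q : ℝ} (hq0 : 0 < q) (hq1 : q < 1) (n : ℤ) :
    Summable (fun j : ℕ => Real.log (1 + (1 - q) ^ 2 * q ^ (2 * n + 2 * (j : ℤ)))) := by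
  have hqne : q ≠ 0 := hq0.ne'
  have hgeom : Summable (fun j : ℕ => (1 - q) ^ 2 * q ^ (2 * n) * (q ^ 2) ^ j) :=
    (summable_geometric_of_lt_one (by positivity) (by nlinarith)).mul_left _
  refine Summable.of_nonneg_of_le (fun j => Real.log_nonneg ?_) (fun j => ?_) hgeom
  · nlinarith [mul_nonneg (sq_nonneg (1 - q)) (zpow_pos hq0 (2 * n + 2 * (j : ℤ))).le]
  · calc Real.log (1 + (1 - q) ^ 2 * q ^ (2 * n + 2 * (j : ℤ)))
        ≤ (1 + (1 - q) ^ 2 * q ^ (2 * n + 2 * (j : ℤ))) - 1 :=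
          Real.log_le_sub_one_of_pos (qpa_pos hq0 _ _)
      _ = (1 - q) ^ 2 * q ^ (2 * n) * (q ^ 2) ^ j := by
          rw [qpa_zpow_split q hqne]; ring

private lemma qpa_multipliable {q : ℝ} (hq0 : 0 < q) (hq1 : q < 1) (n : ℤ) :
    Multipliable (fun j : ℕ => 1 + (1 - q) ^ 2 * q ^ (2 * n + 2 * (j : ℤ))) :=
  Real.multipliable_of_summable_log
    (fun j => qpa_pos hq0 _ _) (qpa_summable_log hq0 hq1 n)

private lemma qpa_tprod_eq {q : ℝ} (hq0 : 0 < q) (hq1 : q < 1) (n : ℤ) :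
    (∏' j : ℕ, (1 + (1 - q) ^ 2 * q ^ (2 * n + 2 * (j : ℤ))))
      = Real.exp (∑' j : ℕ, Real.log (1 + (1 - q) ^ 2 * q ^ (2 * n + 2 * (j : ℤ)))) := by
  have h := Real.rexp_tsum_eq_tprod
    (f := fun (j : ℕ) => 1 + (1 - q) ^ 2 * q ^ (2 * n + 2 * (j : ℤ)))
    (fun j => qpa_pos hq0 _ _) (qpa_summable_log hq0 hq1 n)
  exact h.symm

private lemma qpa_prod_zpow {q : ℝ} (hq : q ≠ 0) (s : Finset ℕ) (e : ℕ → ℤ) :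
    ∏ i ∈ s, q ^ e i = q ^ (∑ i ∈ s, e i) := by
  classical
  induction s using Finset.induction with
  | empty => simp
  | insert _ _ h ih => rw [Finset.prod_insert h, Finset.sum_insert h, zpow_add₀ hq, ih]

set_option maxHeartbeats 1000000 in
/-- For an integer `n ≤ 0`, `q^{-n(n-1)} / (-(1-q)² q^{2n}; q²)_∞ → 1/2` as `q → 0⁺`. -/
theorem qPochInf_asymptotics (n : ℤ) (hn : n ≤ 0) :
    Filter.Tendsto (fun q : ℝ =>
        q ^ (-(n * (n - 1))) / ∏' j : ℕ, (1 + (1 - q) ^ 2 * q ^ (2 * n + 2 * (j : ℤ))))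
      (nhdsWithin 0 (Set.Ioo 0 1)) (nhds (1 / 2)) := by
  obtain ⟨m, rfl⟩ : ∃ m : ℕ, n = -(m : ℤ) := ⟨(-n).toNat, by omega⟩
  set G : ℝ → ℝ := fun q => ∏ i ∈ Finset.range (m + 1), (q ^ (2 * (m - i)) + (1 - q) ^ 2)
    with hGdef
  set S : ℝ → ℝ := fun q =>
      ∑' i : ℕ, Real.log (1 + (1 - q) ^ 2 * q ^ (2 * (1 : ℤ) + 2 * (i : ℤ))) with hSdef
  -- the model function
  have hEq : ∀ q ∈ Set.Ioo (0 : ℝ) 1,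
      q ^ (-(-(m : ℤ) * (-(m : ℤ) - 1))) /
          (∏' j : ℕ, (1 + (1 - q) ^ 2 * q ^ (2 * (-(m : ℤ)) + 2 * (j : ℤ))))
        = 1 / (G q * Real.exp (S q)) := by
    intro q hq
    obtain ⟨hq0, hq1⟩ := hq
    have hqne : q ≠ 0 := hq0.ne'
    -- split the product
    have hcongr : ∀ i : ℕ,
        (1 + (1 - q) ^ 2 * q ^ (2 * (1 : ℤ) + 2 * (i : ℤ)))
          = (1 + (1 - q) ^ 2 * q ^ (2 * (-(m : ℤ)) + 2 * ((i + (m + 1) : ℕ) : ℤ))) := by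
      intro i
      have he : 2 * (1 : ℤ) + 2 * (i : ℤ) = 2 * (-(m : ℤ)) + 2 * ((i + (m + 1) : ℕ) : ℤ) := by
        push_cast; ring
      rw [he]
    have hmulshift : Multipliable (fun i : ℕ =>
        1 + (1 - q) ^ 2 * q ^ (2 * (-(m : ℤ)) + 2 * ((i + (m + 1) : ℕ) : ℤ))) :=
      (qpa_multipliable hq0 hq1 1).congr hcongr
    have hsplit := Multipliable.prod_mul_tprod_nat_mul' (f := fun j : ℕ =>
        1 + (1 - q) ^ 2 * q ^ (2 * (-(m : ℤ)) + 2 * (j : ℤ))) (k := m + 1) hmulshift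
    -- tail equals exp (S q)
    have htail : (∏' i : ℕ, (1 + (1 - q) ^ 2 * q ^ (2 * (-(m : ℤ)) + 2 * ((i + (m + 1) : ℕ) : ℤ))))
        = Real.exp (S q) := by
      rw [tprod_congr (fun i => (hcongr i).symm), qpa_tprod_eq hq0 hq1 1]
    -- finite part
    have hfactor : ∀ i ∈ Finset.range (m + 1),
        (1 + (1 - q) ^ 2 * q ^ (2 * (-(m : ℤ)) + 2 * (i : ℤ)))
          = q ^ (2 * (i : ℤ) - 2 * (m : ℤ)) * (q ^ (2 * (m - i)) + (1 - q) ^ 2) := by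
      intro i hi
      have him : i ≤ m := by simpa [Nat.lt_succ_iff] using hi
      have h1 : q ^ (2 * (i : ℤ) - 2 * (m : ℤ)) * q ^ (2 * (m - i)) = 1 := by
        rw [← zpow_natCast q (2 * (m - i)), ← zpow_add₀ hqne]
        rw [show (2 * (i : ℤ) - 2 * m) + ((2 * (m - i) : ℕ) : ℤ) = 0 by omega, zpow_zero]
      have h2 : 2 * (-(m : ℤ)) + 2 * (i : ℤ) = 2 * (i : ℤ) - 2 * (m : ℤ) := by ring
      rw [h2, mul_add, h1]
      ring
    have hsum : ∑ i ∈ Finset.range (m + 1), (2 * (i : ℤ) - 2 * (m : ℤ)) = -((m : ℤ) * (m + 1)) := by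
      have h2 : ((∑ i ∈ Finset.range (m + 1), i) * 2 : ℕ) = (m + 1) * m := by
        simpa using Finset.sum_range_id_mul_two (m + 1)
      have h2' : ((∑ i ∈ Finset.range (m + 1), (i : ℤ)) * 2 : ℤ) = (m + 1) * m := by
        exact_mod_cast (by push_cast [← h2]; push_cast; ring : _)
      rw [Finset.sum_sub_distrib, ← Finset.mul_sum, Finset.sum_const, Finset.card_range]
      push_cast [nsmul_eq_mul]
      linarith
    have hfin : (∏ i ∈ Finset.range (m + 1),
        (1 + (1 - q) ^ 2 * q ^ (2 * (-(m : ℤ)) + 2 * (i : ℤ))))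
          = q ^ (-((m : ℤ) * (m + 1))) * G q := by
      rw [Finset.prod_congr rfl hfactor, Finset.prod_mul_distrib,
        qpa_prod_zpow hqne, hsum]
    have hexp : -(-(m : ℤ) * (-(m : ℤ) - 1)) = -((m : ℤ) * (m + 1)) := by ring
    rw [hexp, ← hsplit, htail, hfin, mul_assoc, div_mul_eq_div_div,
      div_self (zpow_ne_zero _ hqne)]
  -- limit of G
  have hGcont : Continuous G := by
    apply continuous_finset_prod
    intro i _
    continuity
  have hG0 : G 0 = 2 := by
    rw [hGdef]
    simp only
    rw [Finset.prod_range_succ]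
    rw [Finset.prod_eq_one, Nat.sub_self]
    · norm_num
    · intro i hi
      rw [Finset.mem_range] at hi
      rw [zero_pow (by omega)]
      norm_num
  have hG : Filter.Tendsto G (nhdsWithin 0 (Set.Ioo 0 1)) (nhds 2) := by
    have := hGcont.tendsto 0
    rw [hG0] at this
    exact this.mono_left nhdsWithin_le_nhds
  -- limit of S
  have hSbound : ∀ q ∈ Set.Ioo (0 : ℝ) 1, S q ≤ q ^ 2 / (1 - q ^ 2) := by
    intro q hq
    obtain ⟨hq0, hq1⟩ := hq
    have hqne : q ≠ 0 := hq0.ne'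
    have hq2 : q ^ 2 < 1 := by nlinarith
    have hgeom : Summable (fun i : ℕ => q ^ 2 * (q ^ 2) ^ i) :=
      (summable_geometric_of_lt_one (by positivity) hq2).mul_left _
    have hle : ∀ i : ℕ,
        Real.log (1 + (1 - q) ^ 2 * q ^ (2 * (1 : ℤ) + 2 * (i : ℤ))) ≤ q ^ 2 * (q ^ 2) ^ i := by
      intro i
      have h1 : Real.log (1 + (1 - q) ^ 2 * q ^ (2 * (1 : ℤ) + 2 * (i : ℤ)))
          ≤ (1 - q) ^ 2 * q ^ (2 * (1 : ℤ) + 2 * (i : ℤ)) := by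
        have := Real.log_le_sub_one_of_pos (qpa_pos hq0 (1 - q) (2 * (1 : ℤ) + 2 * (i : ℤ)))
        linarith
      have h2 : (1 - q) ^ 2 * q ^ (2 * (1 : ℤ) + 2 * (i : ℤ)) ≤ q ^ 2 * (q ^ 2) ^ i := by
        rw [qpa_zpow_split q hqne]
        have hq21 : q ^ ((2 : ℤ) * 1) = q ^ (2 : ℕ) := by
          rw [mul_one, zpow_two, ← sq]
        rw [hq21]
        have hX : (0 : ℝ) ≤ q ^ (2 : ℕ) * (q ^ 2) ^ i := by positivity
        have h1q : (1 - q) ^ 2 ≤ 1 := by nlinarith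
        calc (1 - q) ^ 2 * (q ^ (2 : ℕ) * (q ^ 2) ^ i)
            ≤ 1 * (q ^ (2 : ℕ) * (q ^ 2) ^ i) := mul_le_mul_of_nonneg_right h1q hX
          _ = q ^ 2 * (q ^ 2) ^ i := by ring
      linarith
    calc S q ≤ ∑' i : ℕ, q ^ 2 * (q ^ 2) ^ i :=
          Summable.tsum_le_tsum hle (qpa_summable_log hq0 hq1 1) hgeom
      _ = q ^ 2 * (1 - q ^ 2)⁻¹ := by
          rw [tsum_mul_left, tsum_geometric_of_lt_one (by positivity) hq2]
      _ = q ^ 2 / (1 - q ^ 2) := by rw [div_eq_mul_inv]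
  have hSnonneg : ∀ q ∈ Set.Ioo (0 : ℝ) 1, 0 ≤ S q := by
    intro q hq
    refine tsum_nonneg fun i => Real.log_nonneg ?_
    nlinarith [mul_nonneg (sq_nonneg (1 - q)) (zpow_pos hq.1 (2 * (1 : ℤ) + 2 * (i : ℤ))).le]
  have hub : Filter.Tendsto (fun q : ℝ => q ^ 2 / (1 - q ^ 2))
      (nhdsWithin 0 (Set.Ioo 0 1)) (nhds 0) := by
    have : Filter.Tendsto (fun q : ℝ => q ^ 2 / (1 - q ^ 2)) (nhds 0) (nhds (0 ^ 2 / (1 - 0 ^ 2))) := by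
      apply Filter.Tendsto.div
      · exact ((continuous_pow 2).tendsto 0)
      · exact ((continuous_const.sub (continuous_pow 2)).tendsto 0)
      · norm_num
    norm_num at this
    exact this.mono_left nhdsWithin_le_nhds
  have hS : Filter.Tendsto S (nhdsWithin 0 (Set.Ioo 0 1)) (nhds 0) := by
    refine tendsto_of_tendsto_of_tendsto_of_le_of_le' tendsto_const_nhds hub ?_ ?_
    · exact Filter.eventually_of_mem self_mem_nhdsWithin (fun q hq => hSnonneg q hq)
    · exact Filter.eventually_of_mem self_mem_nhdsWithin (fun q hq => hSbound q hq)
  have hT : Filter.Tendsto (fun q => Real.exp (S q)) (nhdsWithin 0 (Set.Ioo 0 1)) (nhds 1) := by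
    have := (Real.continuous_exp.tendsto 0).comp hS
    simpa [Function.comp_def] using this
  have hlim : Filter.Tendsto (fun q => 1 / (G q * Real.exp (S q)))
      (nhdsWithin 0 (Set.Ioo 0 1)) (nhds (1 / 2)) := by
    have h := Filter.Tendsto.div (tendsto_const_nhds (x := (1 : ℝ))) (hG.mul hT)
      (by norm_num : (2 : ℝ) * 1 ≠ 0)
    rw [show (1 : ℝ) / 2 = 1 / (2 * 1) by norm_num]
    exact h
  refine hlim.congr' ?_
  exact Filter.eventually_of_mem self_mem_nhdsWithin (fun q hq => (hEq q hq).symm)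
end

section
/- Let Q < 0 and ν ∈ ℤ_{≥0}. Define, for each integer n, the pair (β_n^ν, B_n^ν) by: (1, nνQ) for n ≥ 1; (1, n(n+ν-1)Q) for 0 ≥ n ≥ -ν; ((-1)^{(n+ν)/2}, (n(n-2)-ν²)Q/2) for n ≤ -ν-1 with n+ν even; and ((-1)^{(n+ν+1)/2}, (n(n-2)-ν²+3)Q/2) for n ≤ -ν-1 with n+ν odd. Then for every integer n, max[S(β_{n+1})+B_{n+1}, S(-β_n)+B_n-νQ, S(β_{n-1})+B_{n-1}+max(0,(2n-2)Q)] = max[S(-β_{n+1})+B_{n+1}, S(β_n)+B_n-νQ, S(-β_{n-1})+B_{n-1}+max(0,(2n-2)Q)], i.e., (β_n^ν, B_n^ν) solves the p-ultradiscrete Bessel equation. -/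
/-- The formal ultradiscrete sign function `S` with `S(1) = 0`, `S(-1) = -∞`. -/
noncomputable def Sud (x : ℤ) : EReal := if x = 1 then 0 else ⊥

lemma Sud_one : Sud 1 = 0 := if_pos rfl

lemma Sud_neg_one : Sud (-1) = ⊥ := if_neg (by decide)

lemma emax_bot_left (x : EReal) : max ⊥ x = x := max_eq_right bot_le

lemma emax_bot_right (x : EReal) : max x ⊥ = x := max_eq_left bot_le

lemma emax_coe_right (x y : ℝ) (h : x ≤ y) : max (x:EReal) (y:EReal) = (y:EReal) :=
  max_eq_right (EReal.coe_le_coe_iff.mpr h)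

lemma emax_coe_left (x y : ℝ) (h : y ≤ x) : max (x:EReal) (y:EReal) = (x:EReal) :=
  max_eq_left (EReal.coe_le_coe_iff.mpr h)

lemma negOnePow_eval (k : ℤ) : (k.negOnePow : ℤ) = if Even k then 1 else -1 := by
  split
  · simp [Int.negOnePow_even _ (by assumption)]
  · simp [Int.negOnePow_odd _ (Int.not_even_iff_odd.mp (by assumption))]

/-- The ultradiscrete Bessel function `(β_n^ν, B_n^ν)` solves the p-ultradiscrete
Bessel equation. -/
theorem ud_bessel_solves (Q : ℝ) (hQ : Q < 0) (ν : ℕ) (β : ℤ → ℤ) (B : ℤ → ℝ)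
    (hβ : ∀ n : ℤ, β n =
      if 1 ≤ n then 1
      else if -(ν : ℤ) ≤ n then 1
      else if Even (n + ν) then (((n + ν) / 2).negOnePow : ℤ)
      else (((n + ν + 1) / 2).negOnePow : ℤ))
    (hB : ∀ n : ℤ, B n =
      if 1 ≤ n then ((n * ν : ℤ) : ℝ) * Q
      else if -(ν : ℤ) ≤ n then ((n * (n + ν - 1) : ℤ) : ℝ) * Q
      else if Even (n + ν) then ((n * (n - 2) - (ν : ℤ) ^ 2 : ℤ) : ℝ) * Q / 2
      else ((n * (n - 2) - (ν : ℤ) ^ 2 + 3 : ℤ) : ℝ) * Q / 2) :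
    ∀ n : ℤ,
      max (max (Sud (β (n + 1)) + ((B (n + 1) : ℝ) : EReal))
          (Sud (-β n) + ((B n - ν * Q : ℝ) : EReal)))
        (Sud (β (n - 1)) +
          ((B (n - 1) + max 0 (((2 * n - 2 : ℤ) : ℝ) * Q) : ℝ) : EReal)) =
      max (max (Sud (-β (n + 1)) + ((B (n + 1) : ℝ) : EReal))
          (Sud (β n) + ((B n - ν * Q : ℝ) : EReal)))
        (Sud (-β (n - 1)) +
          ((B (n - 1) + max 0 (((2 * n - 2 : ℤ) : ℝ) * Q) : ℝ) : EReal)) := by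
  intro n
  have hν : (0:ℝ) ≤ (ν:ℝ) := Nat.cast_nonneg ν
  have hQ' : (0:ℝ) ≤ -Q := by linarith
  by_cases h2 : 2 ≤ n
  · -- Case n ≥ 2
    have hnr : (2:ℝ) ≤ (n:ℝ) := by exact_mod_cast h2
    have hb1 : β (n+1) = 1 := by rw [hβ, if_pos (by omega)]
    have hb0 : β n = 1 := by rw [hβ, if_pos (by omega)]
    have hbm : β (n-1) = 1 := by rw [hβ, if_pos (by omega)]
    have hA : B (n+1) = ((n:ℝ)+1)*ν*Q := by rw [hB, if_pos (by omega)]; push_cast; ring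
    have hC : B n - ν*Q = ((n:ℝ)-1)*(ν:ℝ)*Q := by rw [hB, if_pos (by omega)]; push_cast; ring
    have hD : B (n-1) + max 0 (((2*n-2:ℤ):ℝ)*Q) = ((n:ℝ)-1)*(ν:ℝ)*Q := by
      rw [hB, if_pos (by omega), max_eq_left (by push_cast; nlinarith)]
      push_cast; ring
    rw [hb1, hb0, hbm, hA, hC, hD]
    simp only [neg_neg, Sud_one, Sud_neg_one, zero_add, EReal.bot_add, emax_bot_left,
      emax_bot_right]
    exact emax_coe_right _ _ (by nlinarith [mul_nonneg hν hQ'])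
  by_cases hn1 : n = 1
  · -- Case n = 1
    subst hn1
    have hb1 : β (1+1) = 1 := by rw [hβ, if_pos (by omega)]
    have hb0 : β 1 = 1 := by rw [hβ, if_pos (by omega)]
    have hbm : β (1-1) = 1 := by rw [hβ, if_neg (by omega), if_pos (by omega)]
    have hA : B (1+1) = 2*(ν:ℝ)*Q := by rw [hB, if_pos (by omega)]; push_cast; ring
    have hC : B 1 - ν*Q = (0:ℝ) := by rw [hB, if_pos (by omega)]; push_cast; ring
    have hD : B (1-1) + max 0 (((2*1-2:ℤ):ℝ)*Q) = (0:ℝ) := by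
      rw [hB, if_neg (by omega), if_pos (by omega)]
      norm_num
    rw [hb1, hb0, hbm, hA, hC, hD]
    simp only [neg_neg, Sud_one, Sud_neg_one, zero_add, EReal.bot_add, emax_bot_left,
      emax_bot_right]
    exact emax_coe_right _ _ (by nlinarith [mul_nonneg hν hQ'])
  by_cases hII : 1 - (ν:ℤ) ≤ n
  · -- Case 1 - ν ≤ n ≤ 0
    have hn0 : n ≤ 0 := by omega
    have hnr : (n:ℝ) ≤ 0 := by exact_mod_cast hn0
    have hnν : (1:ℝ) ≤ (n:ℝ) + ν := by exact_mod_cast (show (1:ℤ) ≤ n + ν by omega)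
    have hb1 : β (n+1) = 1 := by
      rw [hβ]
      by_cases h : 1 ≤ n+1
      · rw [if_pos h]
      · rw [if_neg h, if_pos (by omega)]
    have hb0 : β n = 1 := by rw [hβ, if_neg (by omega), if_pos (by omega)]
    have hbm : β (n-1) = 1 := by rw [hβ, if_neg (by omega), if_pos (by omega)]
    have hA : B (n+1) = ((n:ℝ)+1)*((n:ℝ)+ν)*Q := by
      rw [hB]
      by_cases h : 1 ≤ n+1
      · have h0 : n = 0 := by omega
        subst h0
        rw [if_pos h]; push_cast; ring
      · rw [if_neg h, if_pos (by omega)]; push_cast; ring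
    have hC : B n - ν*Q = ((n:ℝ)-1)*((n:ℝ)+ν)*Q := by
      rw [hB, if_neg (by omega), if_pos (by omega)]; push_cast; ring
    have hD : B (n-1) + max 0 (((2*n-2:ℤ):ℝ)*Q) = ((n:ℝ)-1)*((n:ℝ)+ν)*Q := by
      rw [hB, if_neg (by omega), if_pos (by omega),
        max_eq_right (by push_cast; nlinarith [mul_nonneg (by linarith : (0:ℝ) ≤ 2-2*(n:ℝ)) hQ'])]
      push_cast; ring
    rw [hb1, hb0, hbm, hA, hC, hD]
    simp only [neg_neg, Sud_one, Sud_neg_one, zero_add, EReal.bot_add, emax_bot_left,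
      emax_bot_right]
    exact emax_coe_right _ _
      (by nlinarith [mul_nonneg (by linarith : (0:ℝ) ≤ (n:ℝ)+ν) hQ'])
  by_cases hDc : n = -(ν:ℤ)
  · -- Case n = -ν
    subst hDc
    have hb1 : β (-(ν:ℤ)+1) = 1 := by
      rw [hβ]
      by_cases h : 1 ≤ -(ν:ℤ)+1
      · rw [if_pos h]
      · rw [if_neg h, if_pos (by omega)]
    have hb0 : β (-(ν:ℤ)) = 1 := by rw [hβ, if_neg (by omega), if_pos (by omega)]
    have hbm : β (-(ν:ℤ)-1) = 1 := by
      rw [hβ, if_neg (by omega), if_neg (by omega),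
        if_neg (by rintro ⟨l, hl⟩; omega)]
      have e : (-(ν:ℤ)-1 + ν + 1)/2 = 0 := by omega
      rw [e, negOnePow_eval, if_pos (by decide)]
    have hA : B (-(ν:ℤ)+1) = (0:ℝ) := by
      rw [hB]
      by_cases h : 1 ≤ -(ν:ℤ)+1
      · have h0 : (ν:ℤ) = 0 := by omega
        rw [if_pos h, h0]
        push_cast
        ring
      · rw [if_neg h, if_pos (by omega)]; push_cast; ring
    have hC : B (-(ν:ℤ)) - ν*Q = (0:ℝ) := by
      rw [hB, if_neg (by omega), if_pos (by omega)]; push_cast; ring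
    have hnn : (0:ℝ) ≤ 2*(ν:ℝ)+2 := by linarith
    have hMge0 : (0:ℝ) ≤ ((2*(-(ν:ℤ))-2:ℤ):ℝ)*Q := by
      push_cast
      nlinarith [mul_nonneg hnn hQ']
    have hD : B (-(ν:ℤ)-1) + max 0 (((2*(-(ν:ℤ))-2:ℤ):ℝ)*Q) = Q := by
      rw [hB, if_neg (by omega), if_neg (by omega),
        if_neg (by rintro ⟨l, hl⟩; omega), max_eq_right hMge0]
      push_cast; ring
    rw [hb1, hb0, hbm, hA, hC, hD]
    simp only [neg_neg, Sud_one, Sud_neg_one, zero_add, EReal.bot_add, emax_bot_left,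
      emax_bot_right]
    exact emax_coe_left _ _ hQ.le
  by_cases hEc : n = -(ν:ℤ)-1
  · -- Case n = -ν - 1
    subst hEc
    have hb1 : β (-(ν:ℤ)-1+1) = 1 := by
      rw [hβ, if_neg (by omega), if_pos (by omega)]
    have hb0 : β (-(ν:ℤ)-1) = 1 := by
      rw [hβ, if_neg (by omega), if_neg (by omega),
        if_neg (by rintro ⟨l, hl⟩; omega)]
      have e : (-(ν:ℤ)-1 + ν + 1)/2 = 0 := by omega
      rw [e, negOnePow_eval, if_pos (by decide)]
    have hbm : β (-(ν:ℤ)-1-1) = -1 := by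
      rw [hβ, if_neg (by omega), if_neg (by omega), if_pos ⟨-1, by omega⟩]
      have e : (-(ν:ℤ)-1-1 + ν)/2 = -1 := by omega
      rw [e, negOnePow_eval, if_neg (by decide)]
    have hA : B (-(ν:ℤ)-1+1) = (ν:ℝ)*Q := by
      rw [hB, if_neg (by omega), if_pos (by omega)]; push_cast; ring
    have hC : B (-(ν:ℤ)-1) - ν*Q = ((ν:ℝ)+3)*Q := by
      rw [hB, if_neg (by omega), if_neg (by omega),
        if_neg (by rintro ⟨l, hl⟩; omega)]
      push_cast; ring
    have hnn : (0:ℝ) ≤ 2*(ν:ℝ)+4 := by linarith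
    have hMge0 : (0:ℝ) ≤ ((2*(-(ν:ℤ)-1)-2:ℤ):ℝ)*Q := by
      push_cast
      nlinarith [mul_nonneg hnn hQ']
    have hD : B (-(ν:ℤ)-1-1) + max 0 (((2*(-(ν:ℤ)-1)-2:ℤ):ℝ)*Q) = (ν:ℝ)*Q := by
      rw [hB, if_neg (by omega), if_neg (by omega), if_pos ⟨-1, by omega⟩,
        max_eq_right hMge0]
      push_cast; ring
    rw [hb1, hb0, hbm, hA, hC, hD]
    simp only [neg_neg, Sud_one, Sud_neg_one, zero_add, EReal.bot_add, emax_bot_left,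
      emax_bot_right]
    exact (emax_coe_right _ _ (by nlinarith)).symm
  · -- Case n ≤ -ν - 2
    have hfin : n ≤ -(ν:ℤ) - 2 := by omega
    have hnν : (n:ℝ) + ν ≤ -2 := by exact_mod_cast (show (n:ℤ) + ν ≤ -2 by omega)
    have hMge : (0:ℝ) ≤ ((2*n-2:ℤ):ℝ)*Q := by
      push_cast
      nlinarith [mul_nonneg (by linarith : (0:ℝ) ≤ 2-2*(n:ℝ)) hQ']
    by_cases hpar : Even (n + (ν:ℤ))
    · -- n + ν even
      obtain ⟨k, hk⟩ := id hpar
      have hodd1 : ¬ Even (n + 1 + (ν:ℤ)) := by rintro ⟨l, hl⟩; omega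
      have hoddm : ¬ Even (n - 1 + (ν:ℤ)) := by rintro ⟨l, hl⟩; omega
      have e0 : (n + (ν:ℤ))/2 = k := by omega
      have e1 : (n + 1 + (ν:ℤ) + 1)/2 = k + 1 := by omega
      have em : (n - 1 + (ν:ℤ) + 1)/2 = k := by omega
      have hA : B (n+1) = (((n:ℝ)+1)*((n:ℝ)-1) - (ν:ℝ)^2 + 3)*Q/2 := by
        rw [hB, if_neg (by omega), if_neg (by omega), if_neg hodd1]; push_cast; ring
      have hC : B n - ν*Q = ((n:ℝ)*((n:ℝ)-2) - (ν:ℝ)^2 - 2*ν)*Q/2 := by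
        rw [hB, if_neg (by omega), if_neg (by omega), if_pos hpar]; push_cast; ring
      have hD : B (n-1) + max 0 (((2*n-2:ℤ):ℝ)*Q) =
          (((n:ℝ)+1)*((n:ℝ)-1) - (ν:ℝ)^2 + 3)*Q/2 := by
        rw [hB, if_neg (by omega), if_neg (by omega), if_neg hoddm, max_eq_right hMge]
        push_cast; ring
      have hCA : ((n:ℝ)*((n:ℝ)-2) - (ν:ℝ)^2 - 2*ν)*Q/2 ≤
          (((n:ℝ)+1)*((n:ℝ)-1) - (ν:ℝ)^2 + 3)*Q/2 := by
        nlinarith [mul_nonneg (by linarith : (0:ℝ) ≤ -((n:ℝ)+ν+1)) hQ']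
      rcases Int.even_or_odd k with hk2 | hk2
      · have hb0 : β n = 1 := by
          rw [hβ, if_neg (by omega), if_neg (by omega), if_pos hpar, e0,
            negOnePow_eval, if_pos hk2]
        have hb1 : β (n+1) = -1 := by
          rw [hβ, if_neg (by omega), if_neg (by omega), if_neg hodd1, e1,
            negOnePow_eval, if_neg (fun h => (Int.even_add_one.mp h) hk2)]
        have hbm : β (n-1) = 1 := by
          rw [hβ, if_neg (by omega), if_neg (by omega), if_neg hoddm, em,
            negOnePow_eval, if_pos hk2]
        rw [hb1, hb0, hbm, hA, hC, hD]
        simp only [neg_neg, Sud_one, Sud_neg_one, zero_add, EReal.bot_add, emax_bot_left,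
          emax_bot_right]
        exact (emax_coe_left _ _ hCA).symm
      · have hk2' : ¬ Even k := Int.not_even_iff_odd.mpr hk2
        have hb0 : β n = -1 := by
          rw [hβ, if_neg (by omega), if_neg (by omega), if_pos hpar, e0,
            negOnePow_eval, if_neg hk2']
        have hb1 : β (n+1) = 1 := by
          rw [hβ, if_neg (by omega), if_neg (by omega), if_neg hodd1, e1,
            negOnePow_eval, if_pos (Int.even_add_one.mpr hk2')]
        have hbm : β (n-1) = -1 := by
          rw [hβ, if_neg (by omega), if_neg (by omega), if_neg hoddm, em,
            negOnePow_eval, if_neg hk2']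
        rw [hb1, hb0, hbm, hA, hC, hD]
        simp only [neg_neg, Sud_one, Sud_neg_one, zero_add, EReal.bot_add, emax_bot_left,
          emax_bot_right]
        exact emax_coe_left _ _ hCA
    · -- n + ν odd
      obtain ⟨k, hk⟩ := Int.not_even_iff_odd.mp hpar
      have heven1 : Even (n + 1 + (ν:ℤ)) := ⟨k+1, by omega⟩
      have hevenm : Even (n - 1 + (ν:ℤ)) := ⟨k, by omega⟩
      have e0 : (n + (ν:ℤ) + 1)/2 = k + 1 := by omega
      have e1 : (n + 1 + (ν:ℤ))/2 = k + 1 := by omega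
      have em : (n - 1 + (ν:ℤ))/2 = k := by omega
      have hA : B (n+1) = (((n:ℝ)+1)*((n:ℝ)-1) - (ν:ℝ)^2)*Q/2 := by
        rw [hB, if_neg (by omega), if_neg (by omega), if_pos heven1]; push_cast; ring
      have hC : B n - ν*Q = ((n:ℝ)*((n:ℝ)-2) - (ν:ℝ)^2 + 3 - 2*ν)*Q/2 := by
        rw [hB, if_neg (by omega), if_neg (by omega), if_neg hpar]; push_cast; ring
      have hD : B (n-1) + max 0 (((2*n-2:ℤ):ℝ)*Q) =
          (((n:ℝ)+1)*((n:ℝ)-1) - (ν:ℝ)^2)*Q/2 := by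
        rw [hB, if_neg (by omega), if_neg (by omega), if_pos hevenm, max_eq_right hMge]
        push_cast; ring
      have hCA : ((n:ℝ)*((n:ℝ)-2) - (ν:ℝ)^2 + 3 - 2*ν)*Q/2 ≤
          (((n:ℝ)+1)*((n:ℝ)-1) - (ν:ℝ)^2)*Q/2 := by
        nlinarith [mul_nonneg (by linarith : (0:ℝ) ≤ 2-(n:ℝ)-ν) hQ']
      rcases Int.even_or_odd k with hk2 | hk2
      · -- k even, so k+1 odd : β n = β (n+1) = -1, β (n-1) = 1
        have hb0 : β n = -1 := by
          rw [hβ, if_neg (by omega), if_neg (by omega), if_neg hpar, e0,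
            negOnePow_eval, if_neg (fun h => (Int.even_add_one.mp h) hk2)]
        have hb1 : β (n+1) = -1 := by
          rw [hβ, if_neg (by omega), if_neg (by omega), if_pos heven1, e1,
            negOnePow_eval, if_neg (fun h => (Int.even_add_one.mp h) hk2)]
        have hbm : β (n-1) = 1 := by
          rw [hβ, if_neg (by omega), if_neg (by omega), if_pos hevenm, em,
            negOnePow_eval, if_pos hk2]
        rw [hb1, hb0, hbm, hA, hC, hD]
        simp only [neg_neg, Sud_one, Sud_neg_one, zero_add, EReal.bot_add, emax_bot_left,
          emax_bot_right]
        exact emax_coe_right _ _ hCA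
      · have hk2' : ¬ Even k := Int.not_even_iff_odd.mpr hk2
        have hb0 : β n = 1 := by
          rw [hβ, if_neg (by omega), if_neg (by omega), if_neg hpar, e0,
            negOnePow_eval, if_pos (Int.even_add_one.mpr hk2')]
        have hb1 : β (n+1) = 1 := by
          rw [hβ, if_neg (by omega), if_neg (by omega), if_pos heven1, e1,
            negOnePow_eval, if_pos (Int.even_add_one.mpr hk2')]
        have hbm : β (n-1) = -1 := by
          rw [hβ, if_neg (by omega), if_neg (by omega), if_pos hevenm, em,
            negOnePow_eval, if_neg hk2']
        rw [hb1, hb0, hbm, hA, hC, hD]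
        simp only [neg_neg, Sud_one, Sud_neg_one, zero_add, EReal.bot_add, emax_bot_left,
          emax_bot_right]
        exact (emax_coe_right _ _ hCA).symm
end
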